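/- For every ν ∈ (0,1], λ > 0 and t > 0, the derivative of the function t ↦ E_{ν,ν}(-λ t^{ν}) exists and satisfies d/dt E_{ν,ν}(-λ t^{ν}) = -(ν/(λ t^{ν})) · λ² t^{2ν-1} E_{ν, 2ν}^{2}(-λ t^{ν}); equivalently, λ² t^{2ν-1} E_{ν,2ν}^{2}(-λ t^{ν}) = -(λ t^{ν}/ν) · d/dt E_{ν,ν}(-λ t^{ν}). -/

import Mathlib

open Real

/-- The generalized Mittag-Leffler function
`E_{α,β}^γ(x) = Σ_{r=0}^∞ (γ)_r x^r / (r! Γ(αr+β))`. -/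
noncomputable def gml (α β γ x : ℝ) : ℝ :=
  ∑' r : ℕ, (∏ i ∈ Finset.range r, (γ + i)) * x ^ r /
    (r.factorial * Real.Gamma (α * r + β))

/-- The two-parameter Mittag-Leffler function `E_{α,β}(x) = Σ_{r=0}^∞ x^r / Γ(αr+β)`. -/
noncomputable def ml (α β x : ℝ) : ℝ :=
  ∑' r : ℕ, x ^ r / Real.Gamma (α * r + β)

lemma gamma_lb {ν x : ℝ} (hν : 0 < ν) (hν1 : ν ≤ 1) (hx : 1 ≤ x) :
    Real.Gamma x * (x + ν - 1) ^ ν ≤ Real.Gamma (x + ν) := by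
  have hx0 : (0:ℝ) < x := lt_of_lt_of_le one_pos hx
  have h1 : (0:ℝ) < x + ν - 1 := by linarith
  have h2 : (0:ℝ) < x + ν := by linarith
  have hc := Real.convexOn_log_Gamma.2 (Set.mem_Ioi.2 h1) (Set.mem_Ioi.2 h2)
      (le_of_lt hν) (by linarith : (0:ℝ) ≤ 1 - ν) (by ring)
  have hcomb : ν • (x + ν - 1) + (1 - ν) • (x + ν) = x := by
    simp [smul_eq_mul]; ring
  rw [hcomb] at hc
  simp only [Function.comp_apply, smul_eq_mul] at hc
  have hG : Real.Gamma (x + ν) = (x + ν - 1) * Real.Gamma (x + ν - 1) := by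
    have := Real.Gamma_add_one (s := x + ν - 1) h1.ne'
    rw [show x + ν - 1 + 1 = x + ν by ring] at this
    exact this
  have hGp1 : 0 < Real.Gamma (x + ν - 1) := Real.Gamma_pos_of_pos h1
  have hGp2 : 0 < Real.Gamma (x + ν) := Real.Gamma_pos_of_pos h2
  have hGpx : 0 < Real.Gamma x := Real.Gamma_pos_of_pos hx0
  have hlog : Real.log (Real.Gamma (x + ν - 1)) =
      Real.log (Real.Gamma (x + ν)) - Real.log (x + ν - 1) := by
    rw [hG, Real.log_mul h1.ne' hGp1.ne']; ring
  rw [hlog] at hc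
  have key : Real.log (Real.Gamma x * (x + ν - 1) ^ ν) ≤ Real.log (Real.Gamma (x + ν)) := by
    rw [Real.log_mul hGpx.ne' (Real.rpow_pos_of_pos h1 ν).ne', Real.log_rpow h1]
    nlinarith [hc]
  exact (Real.log_le_log_iff (by positivity) hGp2).mp key

open Filter in
lemma summable_ml_aux {ν β : ℝ} (hν : 0 < ν) (hν1 : ν ≤ 1) (hβ : 0 < β)
    {a : ℝ} (ha : 0 ≤ a) :
    Summable (fun r : ℕ => (r + 1 : ℝ) * a ^ r / Real.Gamma (ν * r + β)) := by
  apply summable_of_ratio_norm_eventually_le (r := 1/2) (by norm_num)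
  have hbase : Tendsto (fun n : ℕ => ν * n + β) atTop atTop := by
    exact Filter.tendsto_atTop_add_const_right _ β
      (Tendsto.const_mul_atTop hν tendsto_natCast_atTop_atTop)
  have htend : Tendsto (fun n : ℕ => (ν * n + β + ν - 1) ^ ν) atTop atTop := by
    apply (tendsto_rpow_atTop hν).comp
    exact (Filter.tendsto_atTop_add_const_right _ (ν - 1) hbase).congr (fun n => by ring)
  filter_upwards [htend.eventually_ge_atTop (4 * a + 4), hbase.eventually_ge_atTop 1]
    with n h4 h1
  set x := ν * n + β with hx
  have hxν : ν * (n + 1 : ℕ) + β = x + ν := by push_cast; ring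
  have hGp : 0 < Real.Gamma x := Real.Gamma_pos_of_pos (by linarith)
  have hGp' : 0 < Real.Gamma (x + ν) := Real.Gamma_pos_of_pos (by linarith)
  have hlb : Real.Gamma x * (4 * a + 4) ≤ Real.Gamma (x + ν) := by
    calc Real.Gamma x * (4 * a + 4) ≤ Real.Gamma x * (x + ν - 1) ^ ν :=
          mul_le_mul_of_nonneg_left h4 hGp.le
      _ ≤ Real.Gamma (x + ν) := gamma_lb hν hν1 h1
  rw [hxν]
  rw [Real.norm_eq_abs, Real.norm_eq_abs, abs_of_nonneg (by positivity),
    abs_of_nonneg (by positivity), show (1:ℝ)/2 * (((n:ℕ) + 1 : ℝ) * a ^ n / Real.Gamma x)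
      = (1/2 * (((n:ℕ) + 1 : ℝ) * a ^ n)) / Real.Gamma x from by ring,
    div_le_div_iff₀ hGp' hGp]
  push_cast
  have hn0 : (0:ℝ) ≤ (n:ℝ) := Nat.cast_nonneg n
  have hfac : ((n:ℝ) + 1 + 1) * a ≤ 1/2 * ((n:ℝ) + 1) * (4*a+4) := by nlinarith
  calc ((n:ℝ) + 1 + 1) * a ^ (n+1) * Real.Gamma x
      = (((n:ℝ) + 1 + 1) * a) * (a ^ n * Real.Gamma x) := by ring
    _ ≤ (1/2 * ((n:ℝ) + 1) * (4*a+4)) * (a ^ n * Real.Gamma x) :=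
        mul_le_mul_of_nonneg_right hfac (by positivity)
    _ = (1/2 * (((n:ℝ) + 1) * a ^ n)) * (Real.Gamma x * (4*a+4)) := by ring
    _ ≤ (1/2 * (((n:ℝ) + 1) * a ^ n)) * Real.Gamma (x + ν) :=
        mul_le_mul_of_nonneg_left hlb (by positivity)

lemma prod_two_add (r : ℕ) : (∏ i ∈ Finset.range r, ((2:ℝ) + i)) = (r+1).factorial := by
  induction r with
  | zero => simp
  | succ n ih =>
    rw [Finset.prod_range_succ, ih,
      show (n+1+1).factorial = (n+2) * (n+1).factorial from Nat.factorial_succ _]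
    push_cast; ring

/-- For `ν ∈ (0,1]`, `λ > 0`, `t > 0`, the function `t ↦ E_{ν,ν}(-λt^ν)` is
differentiable with
`d/dt E_{ν,ν}(-λt^ν) = -(ν/(λt^ν)) λ² t^{2ν-1} E_{ν,2ν}^2(-λt^ν)`; equivalently
`λ² t^{2ν-1} E_{ν,2ν}^2(-λt^ν) = -(λt^ν/ν) d/dt E_{ν,ν}(-λt^ν)`. -/
theorem deriv_ml_eq_gml (ν lam t : ℝ) (hν : 0 < ν) (hν1 : ν ≤ 1)
    (hlam : 0 < lam) (ht : 0 < t) :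
    HasDerivAt (fun s : ℝ => ml ν ν (-(lam * s ^ ν)))
        (-(ν / (lam * t ^ ν)) *
          (lam ^ 2 * t ^ (2 * ν - 1) * gml ν (2 * ν) 2 (-(lam * t ^ ν)))) t
      ∧ lam ^ 2 * t ^ (2 * ν - 1) * gml ν (2 * ν) 2 (-(lam * t ^ ν))
          = -(lam * t ^ ν / ν) *
              deriv (fun s : ℝ => ml ν ν (-(lam * s ^ ν))) t := by
  have htν : (0:ℝ) < t ^ ν := Real.rpow_pos_of_pos ht ν
  set g : ℕ → ℝ → ℝ := fun n s => (-(lam * s ^ ν)) ^ n / Real.Gamma (ν * n + ν) with hg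
  set g' : ℕ → ℝ → ℝ := fun n s =>
    ((n : ℝ) * (-(lam * s ^ ν)) ^ (n - 1) * (-(lam * (ν * s ^ (ν - 1))))) /
      Real.Gamma (ν * n + ν) with hg'
  set a : ℝ := lam * (2 * t) ^ ν with ha
  have ha0 : 0 < a := by
    have : (0:ℝ) < (2*t) ^ ν := Real.rpow_pos_of_pos (by linarith) ν
    positivity
  set K : ℝ := lam * (ν * (t / 2) ^ (ν - 1)) / a with hK
  have hK0 : 0 < K := by
    have : (0:ℝ) < (t/2) ^ (ν-1) := Real.rpow_pos_of_pos (by linarith) _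
    positivity
  set u : ℕ → ℝ := fun n => ((n : ℝ) + 1) * a ^ n * K / Real.Gamma (ν * n + ν) with hu
  have husum : Summable u := by
    refine ((summable_ml_aux hν hν1 hν ha0.le).mul_left K).congr fun n => ?_
    simp only [hu]; ring
  set T : Set ℝ := Set.Ioo (t/2) (2*t) with hT
  have htT : t ∈ T := ⟨by linarith, by linarith⟩
  have hderiv : ∀ n s, s ∈ T → HasDerivAt (g n) (g' n s) s := by
    intro n s hs
    have hs0 : 0 < s := lt_trans (by linarith) hs.1
    have h1 : HasDerivAt (fun s : ℝ => s ^ ν) (ν * s ^ (ν - 1)) s :=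
      Real.hasDerivAt_rpow_const (Or.inl hs0.ne')
    have h2 : HasDerivAt (fun s : ℝ => -(lam * s ^ ν)) (-(lam * (ν * s ^ (ν - 1)))) s :=
      (h1.const_mul lam).neg
    exact (h2.pow n).div_const _
  have hbound : ∀ n s, s ∈ T → ‖g' n s‖ ≤ u n := by
    intro n s hs
    have hs0 : 0 < s := lt_trans (by linarith) hs.1
    have hsν : (0:ℝ) < s ^ ν := Real.rpow_pos_of_pos hs0 ν
    have hsν1 : (0:ℝ) < s ^ (ν-1) := Real.rpow_pos_of_pos hs0 _
    have hGp : 0 < Real.Gamma (ν * n + ν) := Real.Gamma_pos_of_pos (by positivity)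
    have hb : lam * s ^ ν ≤ a := by
      rw [ha]
      exact mul_le_mul_of_nonneg_left
        (Real.rpow_le_rpow hs0.le hs.2.le hν.le) hlam.le
    have hc : lam * (ν * s ^ (ν - 1)) ≤ K * a := by
      rw [hK, div_mul_cancel₀ _ ha0.ne']
      refine mul_le_mul_of_nonneg_left (mul_le_mul_of_nonneg_left ?_ hν.le) hlam.le
      exact Real.rpow_le_rpow_of_nonpos (by linarith) hs.1.le (by linarith)
    rw [Real.norm_eq_abs, hg']
    simp only
    rw [abs_div, abs_of_pos hGp, abs_mul, abs_mul, abs_pow, abs_neg, abs_neg,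
      abs_of_pos (by positivity : (0:ℝ) < lam * s ^ ν),
      abs_of_pos (by positivity : (0:ℝ) < lam * (ν * s ^ (ν-1))), Nat.abs_cast]
    simp only [hu]
    rw [div_le_div_iff₀ hGp hGp]
    refine mul_le_mul_of_nonneg_right ?_ hGp.le
    match n with
    | 0 => simp; exact hK0.le
    | (m+1) =>
      have hb0 : (0:ℝ) ≤ lam * s ^ ν := by positivity
      have e : ((m+1 : ℕ) : ℝ) = (m:ℝ) + 1 := by push_cast; ring
      simp only [Nat.add_sub_cancel, e]
      calc ((m:ℝ)+1) * (lam * s ^ ν) ^ m * (lam * (ν * s ^ (ν-1)))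
          ≤ ((m:ℝ)+1) * a ^ m * (K * a) := by
            refine mul_le_mul (mul_le_mul_of_nonneg_left ?_ (by positivity)) hc
              (by positivity) (by positivity)
            exact pow_le_pow_left₀ hb0 hb m
        _ = ((m:ℝ)+1) * a ^ (m+1) * K := by ring
        _ ≤ ((m:ℝ)+1+1) * a ^ (m+1) * K := by
            nlinarith [pow_nonneg ha0.le (m+1), hK0.le, mul_nonneg (pow_nonneg ha0.le (m+1)) hK0.le]
  have hg0 : Summable fun n => g n t := by
    refine Summable.of_norm_bounded
      (summable_ml_aux hν hν1 hν (abs_nonneg (lam * t ^ ν))) fun n => ?_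
    have hGp : 0 < Real.Gamma (ν * n + ν) := Real.Gamma_pos_of_pos (by positivity)
    simp only [hg, Real.norm_eq_abs]
    rw [abs_div, abs_of_pos hGp, abs_pow, abs_neg]
    rw [div_le_div_iff₀ hGp hGp]
    have h1 : (1:ℝ) ≤ (n:ℝ) + 1 := by have := Nat.cast_nonneg (α := ℝ) n; linarith
    nlinarith [pow_nonneg (abs_nonneg (lam * t ^ ν)) n, hGp.le,
      mul_nonneg (pow_nonneg (abs_nonneg (lam * t ^ ν)) n) hGp.le]
  have hmain : HasDerivAt (fun z => ∑' n, g n z) (∑' n, g' n t) t :=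
    hasDerivAt_tsum_of_isPreconnected husum isOpen_Ioo (convex_Ioo _ _).isPreconnected
      hderiv hbound htT hg0 htT
  have hfun : (fun z => ∑' n, g n z) = fun s : ℝ => ml ν ν (-(lam * s ^ ν)) := by
    funext z
    simp only [ml, hg]
  have hsum' : Summable fun n => g' n t :=
    Summable.of_norm_bounded husum fun n => hbound n t htT
  set x : ℝ := -(lam * t ^ ν) with hxdef
  set d : ℝ := -(lam * (ν * t ^ (ν - 1))) with hd
  have hkey : ∑' n, g' n t =
      (∑' r : ℕ, ((r:ℝ) + 1) * x ^ r / Real.Gamma (ν * r + 2*ν)) * d := by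
    rw [Summable.tsum_eq_zero_add hsum']
    have h0 : g' 0 t = 0 := by simp [hg']
    rw [h0, zero_add, ← tsum_mul_right]
    apply tsum_congr
    intro n
    simp only [hg', Nat.add_sub_cancel]
    rw [show ν * ((n:ℕ)+1 : ℕ) + ν = ν * n + 2*ν from by push_cast; ring]
    push_cast
    ring
  have hgml : gml ν (2*ν) 2 x =
      ∑' r : ℕ, ((r:ℝ) + 1) * x ^ r / Real.Gamma (ν * r + 2*ν) := by
    rw [gml]
    apply tsum_congr
    intro r
    rw [prod_two_add, Nat.factorial_succ]
    have hG : Real.Gamma (ν * r + 2*ν) ≠ 0 :=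
      (Real.Gamma_pos_of_pos (by positivity)).ne'
    have hf : ((r.factorial : ℝ)) ≠ 0 := Nat.cast_ne_zero.mpr r.factorial_ne_zero
    push_cast
    field_simp
  have hcoef : -(ν / (lam * t ^ ν)) * (lam ^ 2 * t ^ (2*ν-1)) = d := by
    rw [hd, show 2*ν - 1 = ν + (ν - 1) from by ring, Real.rpow_add ht]
    field_simp
  have hval : ∑' n, g' n t =
      -(ν / (lam * t ^ ν)) * (lam ^ 2 * t ^ (2 * ν - 1) * gml ν (2 * ν) 2 x) := by
    rw [hkey, hgml, ← mul_assoc, hcoef]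
    ring
  rw [hfun, hval] at hmain
  refine ⟨hmain, ?_⟩
  rw [hmain.deriv]
  have h2 : lam * t ^ ν ≠ 0 := by positivity
  field_simp
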